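/- Let D be a disk among a finite family 𝒟 of closed disks in the upper half-plane, each tangent to the x-axis (grounded), with D of minimum radius among those considered. Let D_i and D_j be two grounded disks that both intersect D, whose centers both have x-coordinate at most the x-coordinate of the center of D. Then D_i and D_j intersect each other. (Hence the disks intersecting a smallest disk D split into two cliques by the side of D's center, so their intersection graph is cobipartite.) -/

import Mathlib

/-- Center of the grounded disk of radius `r` over `x`. -/
noncomputable def gctr (x r : ℝ) : EuclideanSpace ℝ (Fin 2) := !₂[x, r]

lemma gctr_dist (a ra b rb : ℝ) :
    dist (gctr a ra) (gctr b rb) = Real.sqrt ((a - b) ^ 2 + (ra - rb) ^ 2) := by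
  rw [EuclideanSpace.dist_eq]
  congr 1
  simp [gctr, Fin.sum_univ_two, Real.dist_eq, sq_abs]

/-- Two grounded disks intersecting a common smallest grounded disk `D`, with
centers on the same side of `D`'s center, intersect each other. -/
theorem stmt_12 (xD rD xi ri xj rj : ℝ)
    (hrD : 0 < rD) (hri : rD ≤ ri) (hrj : rD ≤ rj)
    (hiD : dist (gctr xi ri) (gctr xD rD) ≤ ri + rD)
    (hjD : dist (gctr xj rj) (gctr xD rD) ≤ rj + rD)
    (hxi : xi ≤ xD) (hxj : xj ≤ xD) :
    dist (gctr xi ri) (gctr xj rj) ≤ ri + rj := by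
  rw [gctr_dist] at *
  have hi2 : (xi - xD) ^ 2 + (ri - rD) ^ 2 ≤ (ri + rD) ^ 2 := by
    have := Real.sqrt_le_sqrt (le_of_eq (Real.sq_sqrt (by positivity : (0:ℝ) ≤ (xi - xD) ^ 2 + (ri - rD) ^ 2)).symm)
    nlinarith [Real.sq_sqrt (by positivity : (0:ℝ) ≤ (xi - xD) ^ 2 + (ri - rD) ^ 2),
      Real.sqrt_nonneg ((xi - xD) ^ 2 + (ri - rD) ^ 2)]
  have hj2 : (xj - xD) ^ 2 + (rj - rD) ^ 2 ≤ (rj + rD) ^ 2 := by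
    nlinarith [Real.sq_sqrt (by positivity : (0:ℝ) ≤ (xj - xD) ^ 2 + (rj - rD) ^ 2),
      Real.sqrt_nonneg ((xj - xD) ^ 2 + (rj - rD) ^ 2)]
  have hgoal : (xi - xj) ^ 2 + (ri - rj) ^ 2 ≤ (ri + rj) ^ 2 := by
    have hi' : (xi - xD) ^ 2 ≤ 4 * ri * rD := by nlinarith
    have hj' : (xj - xD) ^ 2 ≤ 4 * rj * rD := by nlinarith
    have key : (xi - xj) ^ 2 ≤ 4 * ri * rj := by
      rcases le_total xi xj with h | h
      · nlinarith [sq_nonneg (xj - xD)]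
      · nlinarith [sq_nonneg (xi - xD)]
    nlinarith
  calc Real.sqrt ((xi - xj) ^ 2 + (ri - rj) ^ 2)
      ≤ Real.sqrt ((ri + rj) ^ 2) := Real.sqrt_le_sqrt hgoal
    _ = ri + rj := Real.sqrt_sq (by linarith)
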